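/- arXiv:math/0610878 — 5 statements merged into one kernel-verified Lean document; each statement's English description precedes it below -/
import Mathlib

section
/- Let L and M be saturated subgroups of ℤ^n such that rank L + rank M = n and L + M has finite index in ℤ^n. Then [ℤ^n : L + M] = [Hom(ℤ^n, ℤ) : L^⊥ + M^⊥], i.e., the index of L + M in ℤ^n equals the index of L^⊥ + M^⊥ in the dual lattice Hom(ℤ^n, ℤ). -/
open Module LinearMap

/-- Bridge: the index of a submodule's additive subgroup equals the cardinality of the
module quotient. -/
private lemma index_eq_natCard_quot {R M : Type*} [Ring R] [AddCommGroup M] [Module R M]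
    (S : Submodule R M) : S.toAddSubgroup.index = Nat.card (M ⧸ S) := rfl

/-- The index of the span of `a i • b i` for a basis `b` of a free module over a PID. -/
private lemma natCard_quot_span_smul_basis {R A : Type*} [CommRing R] [IsDomain R]
    [IsPrincipalIdealRing R] [Infinite R] [AddCommGroup A] [Module R A]
    {m : ℕ} (b : Basis (Fin m) R A) (a : Fin m → R) (ha : ∀ i, a i ≠ 0) :
    Nat.card (A ⧸ Submodule.span R (Set.range fun i => a i • b i))
      = ∏ i, (Ideal.span {a i}).toAddSubgroup.index := by
  classical
  have li : LinearIndependent R (fun i : Fin m => a i • b i) := by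
    rw [Fintype.linearIndependent_iff]
    intro g hg i
    simp_rw [smul_smul] at hg
    have := (Fintype.linearIndependent_iff.mp b.linearIndependent) _ hg i
    exact (mul_eq_zero.mp this).resolve_right (ha i)
  let snf : Basis.SmithNormalForm
      (Submodule.span R (Set.range fun i => a i • b i)) (Fin m) m :=
    ⟨b, Basis.span li, Function.Embedding.refl _, a, fun i => by
      rw [Basis.span_apply]; rfl⟩
  rw [← index_eq_natCard_quot, snf.toAddSubgroup_index_eq_ite, if_pos (by simp)]

/-- Key lemma: for an injective map `v` between free finite modules of equal rank over a PID,
the cokernel of `v` and the cokernel of its dual map have the same cardinality. -/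
private lemma natCard_coker_eq_natCard_coker_dualMap {R A B : Type*} [CommRing R] [IsDomain R]
    [IsPrincipalIdealRing R] [Infinite R]
    [AddCommGroup A] [Module R A] [AddCommGroup B] [Module R B]
    [Module.Free R A] [Module.Finite R A] [Module.Free R B] [Module.Finite R B]
    (v : A →ₗ[R] B) (hinj : Function.Injective v)
    (hrank : Module.finrank R A = Module.finrank R B) :
    Nat.card (B ⧸ LinearMap.range v)
      = Nat.card (Module.Dual R A ⧸ LinearMap.range v.dualMap) := by
  classical
  set ι := Module.Free.ChooseBasisIndex R B with hι
  obtain ⟨m, snf⟩ := (LinearMap.range v).smithNormalForm (Module.Free.chooseBasis R B)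
  have hm : m = Fintype.card ι := by
    have h1 : Module.finrank R (LinearMap.range v) = m := by
      simpa using Module.finrank_eq_card_basis snf.bN
    have h2 : Module.finrank R A = Module.finrank R (LinearMap.range v) :=
      (LinearEquiv.ofInjective v hinj).finrank_eq
    have h3 : Module.finrank R B = Fintype.card ι :=
      Module.finrank_eq_card_basis (Module.Free.chooseBasis R B)
    omega
  have hfbij : Function.Bijective snf.f :=
    (Fintype.bijective_iff_injective_and_card snf.f).mpr
      ⟨snf.f.injective, by simp [hm]; exact Fintype.card_congr (Equiv.refl _)⟩
  set fE := Equiv.ofBijective snf.f hfbij with hfE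
  have ha : ∀ i, snf.a i ≠ 0 := by
    intro i h
    apply snf.bN.ne_zero i
    have h2 := snf.snf i
    rw [h, zero_smul] at h2
    exact Subtype.ext h2
  -- basis of A transported from the basis of the range
  set bA : Basis (Fin m) R A := snf.bN.map (LinearEquiv.ofInjective v hinj).symm with hbA
  have hvbA : ∀ i, v (bA i) = snf.a i • snf.bM (snf.f i) := by
    intro i
    have h1 : (LinearEquiv.ofInjective v hinj) (bA i) = snf.bN i := by
      rw [hbA, Basis.map_apply, LinearEquiv.apply_symm_apply]
    have h2 : ((LinearEquiv.ofInjective v hinj (bA i) : LinearMap.range v) : B) = v (bA i) :=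
      LinearEquiv.ofInjective_apply v (bA i)
    rw [h1] at h2
    rw [← h2, snf.snf i]
  -- LHS
  have hLHS : Nat.card (B ⧸ LinearMap.range v)
      = ∏ i, (Ideal.span {snf.a i}).toAddSubgroup.index := by
    rw [← index_eq_natCard_quot, snf.toAddSubgroup_index_eq_ite, if_pos hm]
  -- compute the range of the dual map
  have hdual : ∀ j : ι, v.dualMap (snf.bM.dualBasis j)
      = snf.a (fE.symm j) • bA.dualBasis (fE.symm j) := by
    intro j
    refine bA.ext fun i => ?_
    rw [LinearMap.dualMap_apply, hvbA i, map_smul]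
    by_cases h : i = fE.symm j
    · subst h
      have hfi : snf.f (fE.symm j) = j := fE.apply_symm_apply j
      simp [hfi, Basis.dualBasis_apply_self]
    · have hfi : snf.f i ≠ j := by
        intro hc
        apply h
        have : fE i = j := hc
        rw [← this, Equiv.symm_apply_apply]
      simp [Basis.dualBasis_apply_self, hfi, Ne.symm h]
  have hrange : LinearMap.range v.dualMap
      = Submodule.span R (Set.range fun i => snf.a i • bA.dualBasis i) := by
    have h1 : LinearMap.range v.dualMap
        = Submodule.map v.dualMap (Submodule.span R (Set.range (snf.bM.dualBasis))) := by
      rw [Basis.span_eq, Submodule.map_top]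
    rw [h1, Submodule.map_span, ← Set.range_comp]
    congr 1
    have h2 : (v.dualMap ∘ snf.bM.dualBasis)
        = (fun i => snf.a i • bA.dualBasis i) ∘ fE.symm := by
      funext j
      exact hdual j
    rw [h2, Set.range_comp, Equiv.range_eq_univ, Set.image_univ]
  rw [hLHS, hrange, natCard_quot_span_smul_basis bA.dualBasis snf.a ha]

/-- Surjectivity of restriction of functionals to a submodule with free quotient. -/
private lemma dualRestrict_surjective_of_free_quot {R V : Type*} [CommRing R]
    [AddCommGroup V] [Module R V] (M : Submodule R V) [Module.Free R (V ⧸ M)] :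
    Function.Surjective M.dualRestrict := by
  obtain ⟨s, hs⟩ := Module.projective_lifting_property M.mkQ LinearMap.id
    (Submodule.mkQ_surjective M)
  intro φ
  have hmem : ∀ x : V, ((LinearMap.id : V →ₗ[R] V) - s ∘ₗ M.mkQ) x ∈ M := by
    intro x
    rw [← Submodule.Quotient.mk_eq_zero, ← Submodule.mkQ_apply]
    have h1 : M.mkQ (s (M.mkQ x)) = M.mkQ x := by
      have := congrArg (fun f => f (M.mkQ x)) hs
      simpa using this
    simp only [Submodule.mkQ_apply] at h1
    simp [h1]
  refine ⟨φ.comp (((LinearMap.id : V →ₗ[R] V) - s ∘ₗ M.mkQ).codRestrict M hmem), ?_⟩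
  ext x
  have h0 : M.mkQ (x : V) = 0 := (Submodule.Quotient.mk_eq_zero M).mpr x.2
  have hfix : (((LinearMap.id : V →ₗ[R] V) - s ∘ₗ M.mkQ).codRestrict M hmem) (x : V) = x := by
    apply Subtype.ext
    simp [LinearMap.codRestrict_apply, h0]
  simp only [Submodule.dualRestrict_apply, LinearMap.comp_apply, hfix]

/-- **Equality of lattice indexes.** Let `L` and `M` be saturated subgroups of `ℤ^n` such that
`rank L + rank M = n` and `L + M` has finite index in `ℤ^n`. Then
`[ℤ^n : L + M] = [Hom(ℤ^n, ℤ) : L^⊥ + M^⊥]`. -/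
theorem index_sup_eq_index_dualAnnihilator_sup
    (n : ℕ) (L M : Submodule ℤ (Fin n → ℤ))
    (hLsat : ∀ (c : ℤ) (x : Fin n → ℤ), c ≠ 0 → c • x ∈ L → x ∈ L)
    (hMsat : ∀ (c : ℤ) (x : Fin n → ℤ), c ≠ 0 → c • x ∈ M → x ∈ M)
    (hrank : Module.finrank ℤ L + Module.finrank ℤ M = n)
    (hfin : (L ⊔ M).toAddSubgroup.index ≠ 0) :
    (L ⊔ M).toAddSubgroup.index
      = (L.dualAnnihilator ⊔ M.dualAnnihilator).toAddSubgroup.index := by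
  classical
  -- torsion-free quotients are free
  haveI hQL : NoZeroSMulDivisors ℤ ((Fin n → ℤ) ⧸ L) := by
    refine ⟨fun {c x} h => ?_⟩
    obtain ⟨y, rfl⟩ := Submodule.Quotient.mk_surjective L x
    rcases eq_or_ne c 0 with rfl | hc
    · exact Or.inl rfl
    · refine Or.inr ?_
      rw [← Submodule.Quotient.mk_smul, Submodule.Quotient.mk_eq_zero] at h
      exact (Submodule.Quotient.mk_eq_zero L).mpr (hLsat c y hc h)
  haveI hQM : NoZeroSMulDivisors ℤ ((Fin n → ℤ) ⧸ M) := by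
    refine ⟨fun {c x} h => ?_⟩
    obtain ⟨y, rfl⟩ := Submodule.Quotient.mk_surjective M x
    rcases eq_or_ne c 0 with rfl | hc
    · exact Or.inl rfl
    · refine Or.inr ?_
      rw [← Submodule.Quotient.mk_smul, Submodule.Quotient.mk_eq_zero] at h
      exact (Submodule.Quotient.mk_eq_zero M).mpr (hMsat c y hc h)
  haveI : Module.Free ℤ ((Fin n → ℤ) ⧸ L) := Module.free_of_finite_type_torsion_free'
  haveI : Module.Free ℤ ((Fin n → ℤ) ⧸ M) := Module.free_of_finite_type_torsion_free'
  have hfinV : Module.finrank ℤ (Fin n → ℤ) = n := by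
    rw [Module.finrank_pi, Fintype.card_fin]
  -- finrank of the quotient
  have hQrank : Module.finrank ℤ ((Fin n → ℤ) ⧸ L) = Module.finrank ℤ M := by
    have := L.finrank_quotient_add_finrank
    omega
  -- L ⊓ M = ⊥
  have hinf : L ⊓ M = ⊥ := by
    have hsup : Module.finrank ℤ ↥(L ⊔ M) = n := by
      obtain ⟨e⟩ := Int.submodule_toAddSubgroup_index_ne_zero_iff.mp hfin
      rw [e.finrank_eq, Module.finrank_pi, Fintype.card_fin]
    have h2 := Submodule.rank_sup_add_rank_inf_eq L M
    rw [← Submodule.finrank_eq_rank, ← Submodule.finrank_eq_rank, ← Submodule.finrank_eq_rank,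
      ← Submodule.finrank_eq_rank, ← Nat.cast_add, ← Nat.cast_add, Nat.cast_inj] at h2
    have h3 : Module.finrank ℤ ↥(L ⊓ M) = 0 := by omega
    have h4 : Module.rank ℤ ↥(L ⊓ M) = 0 := by
      rw [← Submodule.finrank_eq_rank, h3, Nat.cast_zero]
    exact Submodule.rank_eq_zero.mp h4
  -- the key map
  set v : ↥M →ₗ[ℤ] (Fin n → ℤ) ⧸ L := L.mkQ ∘ₗ M.subtype with hv
  have hrangev : LinearMap.range v = M.map L.mkQ := by
    rw [hv, LinearMap.range_comp, Submodule.range_subtype]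
  have hinj : Function.Injective v := by
    rw [← LinearMap.ker_eq_bot]
    ext x
    simp only [LinearMap.mem_ker, Submodule.mem_bot, hv, LinearMap.comp_apply,
      Submodule.subtype_apply, Submodule.mkQ_apply, Submodule.Quotient.mk_eq_zero]
    constructor
    · intro hx
      have hx2 : (x : Fin n → ℤ) ∈ L ⊓ M := ⟨hx, x.2⟩
      rw [hinf, Submodule.mem_bot] at hx2
      exact Subtype.ext hx2
    · rintro rfl
      simp
  -- Step A : Nat.card (V ⧸ (L ⊔ M)) = Nat.card ((V ⧸ L) ⧸ range v)
  have stepA : Nat.card ((Fin n → ℤ) ⧸ (L ⊔ M))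
      = Nat.card (((Fin n → ℤ) ⧸ L) ⧸ LinearMap.range v) := by
    set Ψ : (Fin n → ℤ) →ₗ[ℤ] (((Fin n → ℤ) ⧸ L) ⧸ LinearMap.range v) :=
      (LinearMap.range v).mkQ ∘ₗ L.mkQ with hΨ
    have hΨsurj : Function.Surjective Ψ :=
      (Submodule.mkQ_surjective _).comp (Submodule.mkQ_surjective _)
    have hΨker : LinearMap.ker Ψ = L ⊔ M := by
      rw [hΨ, LinearMap.ker_comp, Submodule.ker_mkQ, hrangev, Submodule.comap_map_eq,
        Submodule.ker_mkQ, sup_comm]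
    exact Nat.card_congr ((Submodule.quotEquivOfEq _ _ hΨker.symm).trans
      (Ψ.quotKerEquivOfSurjective hΨsurj)).toEquiv
  -- Step B : key lemma
  have stepB : Nat.card (((Fin n → ℤ) ⧸ L) ⧸ LinearMap.range v)
      = Nat.card (Module.Dual ℤ ↥M ⧸ LinearMap.range v.dualMap) :=
    natCard_coker_eq_natCard_coker_dualMap v hinj (by omega)
  -- Step C : range of the dual map
  have stepC : LinearMap.range v.dualMap = (L.dualAnnihilator).map M.dualRestrict := by
    have h1 : v.dualMap = M.subtype.dualMap ∘ₗ L.mkQ.dualMap := rfl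
    rw [h1, LinearMap.range_comp, Submodule.range_dualMap_mkQ_eq, Submodule.dualRestrict_def]
  -- Step D
  have hres : Function.Surjective M.dualRestrict := dualRestrict_surjective_of_free_quot M
  have stepD : Nat.card (Module.Dual ℤ ↥M ⧸ (L.dualAnnihilator).map M.dualRestrict)
      = Nat.card (Module.Dual ℤ (Fin n → ℤ) ⧸ (L.dualAnnihilator ⊔ M.dualAnnihilator)) := by
    set Φ : Module.Dual ℤ (Fin n → ℤ) →ₗ[ℤ]
        (Module.Dual ℤ ↥M ⧸ (L.dualAnnihilator).map M.dualRestrict) :=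
      ((L.dualAnnihilator).map M.dualRestrict).mkQ ∘ₗ M.dualRestrict with hΦ
    have hΦsurj : Function.Surjective Φ := (Submodule.mkQ_surjective _).comp hres
    have hΦker : LinearMap.ker Φ = L.dualAnnihilator ⊔ M.dualAnnihilator := by
      rw [hΦ, LinearMap.ker_comp, Submodule.ker_mkQ, Submodule.comap_map_eq,
        Submodule.dualRestrict_ker_eq_dualAnnihilator]
    exact (Nat.card_congr ((Submodule.quotEquivOfEq _ _ hΦker.symm).trans
      (Φ.quotKerEquivOfSurjective hΦsurj)).toEquiv).symm
  rw [index_eq_natCard_quot, index_eq_natCard_quot, stepA, stepB, stepC, stepD]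
end

section
/- Let L and M be subgroups of ℤ^n with M saturated, rank L = k, rank M = n − k, and L + M of finite index in ℤ^n. Let q₁, …, q_k be a ℤ-basis of M^⊥ ⊆ Hom(ℤ^n, ℤ) and let r₁, …, r_k be a ℤ-basis of L. Then the index [ℤ^n : L + M] equals the absolute value of the determinant of the k × k integer matrix whose (i, j) entry is q_i(r_j). -/
lemma lemB {k : ℕ} (N : Submodule ℤ (Fin k → ℤ)) (hN : N.toAddSubgroup.index ≠ 0)
    (bN : Module.Basis (Fin k) ℤ N) :
    N.toAddSubgroup.index = (Matrix.of fun i j : Fin k => (bN j : Fin k → ℤ) i).det.natAbs := by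
  classical
  obtain ⟨m, snf⟩ := N.smithNormalForm (Pi.basisFun ℤ (Fin k))
  have hm : m = k := by simpa using snf.toAddSubgroup_index_ne_zero_iff.mp hN
  subst hm
  have hidx : N.toAddSubgroup.index = ∏ i, (snf.a i).natAbs := by
    rw [snf.toAddSubgroup_index_eq_pow_mul_prod]
    simp [Int.index_zmultiples]
  -- change of basis matrix
  set C := snf.bN.toMatrix bN with hC
  have hCunit : C.det.natAbs = 1 := by
    have h1 : C * bN.toMatrix snf.bN = 1 := snf.bN.toMatrix_mul_toMatrix_flip bN
    have h2 := congrArg Int.natAbs (congrArg Matrix.det h1)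
    rw [Matrix.det_mul, Int.natAbs_mul] at h2
    simp only [Matrix.det_one, Int.natAbs_one] at h2
    exact Nat.eq_one_of_mul_eq_one_right h2
  have hrep : ∀ j, (bN j : Fin m → ℤ)
      = ∑ l, snf.bN.repr (bN j) l • (snf.bN l : Fin m → ℤ) := by
    intro j
    conv_lhs => rw [← snf.bN.sum_repr (bN j)]
    rw [Submodule.coe_sum]; simp only [Submodule.coe_smul]
  have hsplit : (Matrix.of fun i j => (bN j : Fin m → ℤ) i)
      = (Matrix.of fun i l => (snf.bN l : Fin m → ℤ) i) * C := by
    ext i j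
    simp [Matrix.mul_apply, hrep j, hC, Module.Basis.toMatrix_apply, mul_comm]
  -- the snf basis matrix
  let σ := Equiv.ofBijective snf.f (Finite.injective_iff_bijective.mp snf.f.injective)
  have hsnfmat : (Matrix.of fun i l => (snf.bN l : Fin m → ℤ) i)
      = ((Matrix.of fun i l => (snf.bM l : Fin m → ℤ) i).submatrix id σ)
          * Matrix.diagonal snf.a := by
    ext i l
    simp [Matrix.mul_apply, snf.snf l, Matrix.diagonal, σ, Equiv.ofBijective, mul_comm]
  have hbMunit : (Matrix.of fun i l => (snf.bM l : Fin m → ℤ) i).det.natAbs = 1 := by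
    have hmat : (Matrix.of fun i l => (snf.bM l : Fin m → ℤ) i)
        = (Pi.basisFun ℤ (Fin m)).toMatrix snf.bM := by
      ext i l
      simp [Module.Basis.toMatrix_apply]
    have h1 : (Pi.basisFun ℤ (Fin m)).toMatrix snf.bM
        * snf.bM.toMatrix (Pi.basisFun ℤ (Fin m)) = 1 :=
      (Pi.basisFun ℤ (Fin m)).toMatrix_mul_toMatrix_flip snf.bM
    have h2 := congrArg Int.natAbs (congrArg Matrix.det h1)
    rw [Matrix.det_mul, Int.natAbs_mul] at h2
    simp only [Matrix.det_one, Int.natAbs_one] at h2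
    rw [hmat]
    exact Nat.eq_one_of_mul_eq_one_right h2
  rw [hsplit, hsnfmat, Matrix.det_mul, Matrix.det_mul, Matrix.det_permute',
    Matrix.det_diagonal, Int.natAbs_mul, Int.natAbs_mul, Int.natAbs_mul, hCunit, hbMunit,
    hidx]
  simp only [Int.cast_id, Int.units_natAbs, one_mul, mul_one]
  exact (map_prod Int.natAbsHom snf.a Finset.univ).symm

/-- **Lattice index as a determinant.** Let `L` and `M` be subgroups of `ℤ^n` with `M` saturated,
`rank L = k`, `rank M = n − k`, and `L + M` of finite index in `ℤ^n`. Let `q₁, …, q_k` be a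
`ℤ`-basis of `M^⊥ ⊆ Hom(ℤ^n, ℤ)` and `r₁, …, r_k` a `ℤ`-basis of `L`. Then
`[ℤ^n : L + M] = |det (q_i(r_j))_{i,j}|`. -/
theorem index_sup_eq_natAbs_det
    (n k : ℕ) (hk : k ≤ n) (L M : Submodule ℤ (Fin n → ℤ))
    (hMsat : ∀ (c : ℤ) (x : Fin n → ℤ), c ≠ 0 → c • x ∈ M → x ∈ M)
    (hL : Module.finrank ℤ L = k) (hM : Module.finrank ℤ M = n - k)
    (hfin : (L ⊔ M).toAddSubgroup.index ≠ 0)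
    (q : Module.Basis (Fin k) ℤ M.dualAnnihilator) (r : Module.Basis (Fin k) ℤ L) :
    (L ⊔ M).toAddSubgroup.index
      = (Matrix.of fun i j : Fin k =>
          (q i : Module.Dual ℤ (Fin n → ℤ)) (r j : Fin n → ℤ)).det.natAbs := by
  classical
  haveI : NoZeroSMulDivisors ℤ ((Fin n → ℤ) ⧸ M) := by
    refine ⟨fun {c} {x} h => ?_⟩
    obtain ⟨y, rfl⟩ := Submodule.Quotient.mk_surjective M x
    by_cases hc : c = 0
    · exact Or.inl hc
    · right
      rw [← Submodule.Quotient.mk_smul, Submodule.Quotient.mk_eq_zero] at h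
      rw [Submodule.Quotient.mk_eq_zero]
      exact hMsat c y hc h
  set g : M.dualAnnihilator ≃ₗ[ℤ] Module.Dual ℤ ((Fin n → ℤ) ⧸ M) :=
    M.dualQuotEquivDualAnnihilator.symm with hg
  set qt : Module.Basis (Fin k) ℤ (Module.Dual ℤ ((Fin n → ℤ) ⧸ M)) := q.map g with hqt
  set Ψ : ((Fin n → ℤ) ⧸ M) ≃ₗ[ℤ] (Fin k → ℤ) :=
    (Module.evalEquiv ℤ _).trans qt.dualBasis.equivFun with hΨ
  set Φ : (Fin n → ℤ) →ₗ[ℤ] (Fin k → ℤ) := (Ψ : _ →ₗ[ℤ] _) ∘ₗ M.mkQ with hΦ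
  have hΦapp : ∀ (x : Fin n → ℤ) (i : Fin k),
      Φ x i = (q i : Module.Dual ℤ (Fin n → ℤ)) x := by
    intro x i
    have h1 : Φ x i = qt i (Submodule.Quotient.mk x) := by
      simp [hΦ, hΨ, Module.Basis.equivFun_apply, Module.Basis.dualBasis_repr]
    rw [h1]
    have h2 := Submodule.dualQuotEquivDualAnnihilator_apply M (g (q i)) x
    rw [hg, LinearEquiv.apply_symm_apply] at h2
    rw [hqt, Module.Basis.map_apply, ← h2]
    rfl
  have hker : LinearMap.ker Φ = M := by
    rw [hΦ, LinearMap.ker_comp, LinearEquiv.ker, Submodule.comap_bot, Submodule.ker_mkQ]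
  have hsurj : Function.Surjective Φ := by
    rw [hΦ, LinearMap.coe_comp]
    exact Ψ.surjective.comp (Submodule.mkQ_surjective M)
  set N : Submodule ℤ (Fin k → ℤ) := Submodule.map Φ L with hN
  have hmapM : Submodule.map Φ M = ⊥ := by
    rw [← hker]
    ext x
    simp only [Submodule.mem_map, LinearMap.mem_ker, Submodule.mem_bot]
    constructor
    · rintro ⟨y, hy, rfl⟩; exact hy
    · rintro rfl; exact ⟨0, by simp⟩
  have hidx : (L ⊔ M).toAddSubgroup.index = N.toAddSubgroup.index := by
    have hker' : ((Φ : (Fin n → ℤ) →+ (Fin k → ℤ))).ker ≤ (L ⊔ M).toAddSubgroup := by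
      intro x hx
      have : Φ x = 0 := hx
      have hxM : x ∈ M := by rw [← hker]; exact this
      exact Submodule.mem_toAddSubgroup _ |>.mpr (Submodule.mem_sup_right hxM)
    have h3 := AddSubgroup.index_map_eq ((L ⊔ M).toAddSubgroup) (f := (Φ : (Fin n → ℤ) →+ (Fin k → ℤ)))
      hsurj hker'
    rw [← h3, ← Submodule.map_toAddSubgroup, Submodule.map_sup, hmapM, sup_bot_eq]
  have hNfin : N.toAddSubgroup.index ≠ 0 := by rw [← hidx]; exact hfin
  -- a basis of N of size k
  obtain ⟨m, snfN⟩ := N.smithNormalForm (Pi.basisFun ℤ (Fin k))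
  have hm : m = k := by simpa using snfN.toAddSubgroup_index_ne_zero_iff.mp hNfin
  let bN0 : Module.Basis (Fin k) ℤ N := snfN.bN.reindex (finCongr hm)
  -- the restricted map
  have hmem : ∀ x ∈ L, Φ x ∈ N := fun x hx => Submodule.mem_map_of_mem hx
  set f' : L →ₗ[ℤ] N := Φ.restrict hmem with hf'
  have hf'surj : Function.Surjective f' := by
    rintro ⟨y, hy⟩
    obtain ⟨x, hx, rfl⟩ := hy
    exact ⟨⟨x, hx⟩, rfl⟩
  set g0 : (Fin k → ℤ) →ₗ[ℤ] (Fin k → ℤ) :=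
    (bN0.equivFun : N →ₗ[ℤ] _) ∘ₗ f' ∘ₗ (r.equivFun.symm : _ →ₗ[ℤ] L) with hg0
  have hg0surj : Function.Surjective g0 := by
    rw [hg0]
    simp only [LinearMap.coe_comp, LinearEquiv.coe_coe]
    exact bN0.equivFun.surjective.comp (hf'surj.comp r.equivFun.symm.surjective)
  have hg0inj : Function.Injective g0 :=
    OrzechProperty.injective_of_surjective_endomorphism g0 hg0surj
  have hf'inj : Function.Injective f' := by
    intro x y hxy
    have h4 : g0 (r.equivFun x) = g0 (r.equivFun y) := by
      rw [hg0]
      simp only [LinearMap.coe_comp, LinearEquiv.coe_coe, Function.comp_apply,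
        LinearEquiv.symm_apply_apply]
      rw [hxy]
    exact r.equivFun.injective (hg0inj h4)
  let e : L ≃ₗ[ℤ] N := LinearEquiv.ofBijective f' ⟨hf'inj, hf'surj⟩
  let bN : Module.Basis (Fin k) ℤ N := r.map e
  rw [hidx, lemB N hNfin bN]
  have h6 : (Matrix.of fun i j : Fin k => (bN j : Fin k → ℤ) i)
      = Matrix.of fun i j : Fin k =>
          (q i : Module.Dual ℤ (Fin n → ℤ)) (r j : Fin n → ℤ) := by
    ext i j
    have h5 : (bN j : Fin k → ℤ) = Φ (r j : Fin n → ℤ) := rfl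
    simp only [Matrix.of_apply, h5, hΦapp]
  rw [h6]
end

section
/- Intersection of sub-torus cosets: Let M₁ and M₂ be subgroups of ℤ^n with M₁ ∩ M₂ = 0 and M₁ + M₂ of finite index in ℤ^n, and let y₁, y₂ ∈ (ℂˣ)^n. Then the set S = { x ∈ (ℂˣ)^n : x^a = y₁^a for all a ∈ M₁, and x^b = y₂^b for all b ∈ M₂ } is finite and its cardinality equals the index [ℤ^n : M₁ + M₂]. -/
private lemma exists_zpow_eq (z : ℂˣ) (m : ℤ) (hm : m ≠ 0) : ∃ w : ℂˣ, w ^ m = z := by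
  have hnat : ∀ (z : ℂˣ) (k : ℕ), k ≠ 0 → ∃ w : ℂˣ, w ^ (k : ℤ) = z := by
    intro z k hk
    obtain ⟨w, hw⟩ := IsAlgClosed.exists_pow_nat_eq (z : ℂ) (Nat.pos_of_ne_zero hk)
    have hw0 : w ≠ 0 := by
      intro h; rw [h, zero_pow hk] at hw; exact z.ne_zero hw.symm
    refine ⟨Units.mk0 w hw0, ?_⟩
    ext
    push_cast
    simpa using hw
  rcases lt_or_gt_of_ne hm with h | h
  · obtain ⟨w, hw⟩ := hnat z⁻¹ (-m).toNat (by omega)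
    have : ((-m).toNat : ℤ) = -m := by omega
    rw [this] at hw
    refine ⟨w, ?_⟩
    rw [← inv_inv z, ← hw, ← zpow_neg, neg_neg]
  · obtain ⟨w, hw⟩ := hnat z m.toNat (by omega)
    have : (m.toNat : ℤ) = m := by omega
    exact ⟨w, by rwa [this] at hw⟩

noncomputable instance : DivisibleBy (Additive ℂˣ) ℤ where
  div a m := if h : m = 0 then 0 else Additive.ofMul (exists_zpow_eq a.toMul m h).choose
  div_zero a := by simp
  div_cancel := by
    intro m a hm
    simp only [dif_neg hm]
    rw [← ofMul_zpow]
    exact congrArg Additive.ofMul (exists_zpow_eq a.toMul m hm).choose_spec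


/-- **Intersection of sub-torus cosets.** Let `M₁` and `M₂` be subgroups of `ℤ^n` with
`M₁ ∩ M₂ = 0` and `M₁ + M₂` of finite index in `ℤ^n`, and let `y₁, y₂ ∈ (ℂˣ)^n`. Then the set
`S = { x : x^a = y₁^a ∀ a ∈ M₁, x^b = y₂^b ∀ b ∈ M₂ }` is finite of cardinality
`[ℤ^n : M₁ + M₂]`. -/
theorem card_intersection_subtorus_cosets
    (n : ℕ) (M₁ M₂ : Submodule ℤ (Fin n → ℤ))
    (hdisj : M₁ ⊓ M₂ = ⊥)
    (hfin : (M₁ ⊔ M₂).toAddSubgroup.index ≠ 0)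
    (y₁ y₂ : Fin n → ℂˣ)
    (S : Set (Fin n → ℂˣ))
    (hS : S = {x | (∀ a ∈ M₁, ∏ i, x i ^ a i = ∏ i, y₁ i ^ a i) ∧
                   (∀ b ∈ M₂, ∏ i, x i ^ b i = ∏ i, y₂ i ^ b i)}) :
    S.Finite ∧ S.ncard = (M₁ ⊔ M₂).toAddSubgroup.index := by
  classical
  set A := Additive ℂˣ
  set M : Submodule ℤ (Fin n → ℤ) := M₁ ⊔ M₂ with hM
  set Q := (Fin n → ℤ) ⧸ M with hQ
  -- index is card of the quotient
  have hidx : (M.toAddSubgroup).index = Nat.card Q := rfl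
  -- the character equivalence
  let ce := (Pi.basisFun ℤ (Fin n)).constr (M' := A) ℤ
  let χe : (Fin n → ℂˣ) ≃ ((Fin n → ℤ) →ₗ[ℤ] A) :=
    (Equiv.piCongrRight fun _ => Additive.ofMul).trans ce.toEquiv
  have χapply : ∀ (x : Fin n → ℂˣ) (a : Fin n → ℤ),
      χe x a = Additive.ofMul (∏ i, x i ^ a i) := by
    intro x a
    show ce (fun i => Additive.ofMul (x i)) a = _
    rw [Module.Basis.constr_apply_fintype]
    have h1 : ∀ i : Fin n, ((Pi.basisFun ℤ (Fin n)).equivFun a) i = a i := by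
      intro i; simp
    simp only [h1]
    rw [ofMul_prod]
    exact Finset.sum_congr rfl fun i _ => (ofMul_zpow _ _).symm
  -- injectivity of A as ℤ-module
  have hInj : Module.Injective ℤ A := (Module.Baer.of_divisible A).injective
  -- build φ agreeing with χe y₁ on M₁ and χe y₂ on M₂
  let θ : (Fin n → ℤ) →ₗ[ℤ] A := χe y₂ - χe y₁
  let j : M₂ →ₗ[ℤ] ((Fin n → ℤ) ⧸ M₁) := M₁.mkQ ∘ₗ M₂.subtype
  have hj : Function.Injective j := by
    rw [← LinearMap.ker_eq_bot]
    refine (Submodule.eq_bot_iff _).2 fun u hu => ?_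
    have h1 : (u : Fin n → ℤ) ∈ M₁ := by
      have : M₁.mkQ (u : Fin n → ℤ) = 0 := hu
      rwa [Submodule.mkQ_apply, Submodule.Quotient.mk_eq_zero] at this
    have : (u : Fin n → ℤ) ∈ M₁ ⊓ M₂ := ⟨h1, u.2⟩
    rw [hdisj] at this
    exact Subtype.ext this
  obtain ⟨h, hh⟩ := hInj.out j hj (θ ∘ₗ M₂.subtype)
  let φ : (Fin n → ℤ) →ₗ[ℤ] A := χe y₁ + h ∘ₗ M₁.mkQ
  have hφ1 : ∀ a ∈ M₁, φ a = χe y₁ a := by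
    intro a ha
    have : M₁.mkQ a = 0 := by rwa [Submodule.mkQ_apply, Submodule.Quotient.mk_eq_zero]
    simp [φ, this]
  have hφ2 : ∀ b ∈ M₂, φ b = χe y₂ b := by
    intro b hb
    have h1 : h (M₁.mkQ b) = θ b := hh ⟨b, hb⟩
    show χe y₁ b + h (M₁.mkQ b) = χe y₂ b
    rw [h1]
    show χe y₁ b + (χe y₂ b - χe y₁ b) = χe y₂ b
    abel
  -- membership characterization
  have key : ∀ x : Fin n → ℂˣ, x ∈ S ↔ M ≤ LinearMap.ker (χe x - φ) := by
    intro x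
    rw [hS]
    constructor
    · rintro ⟨h₁, h₂⟩
      rw [hM, sup_le_iff]
      constructor
      · intro a ha
        rw [LinearMap.mem_ker, LinearMap.sub_apply, hφ1 a ha, χapply, χapply,
          h₁ a ha, sub_self]
      · intro b hb
        rw [LinearMap.mem_ker, LinearMap.sub_apply, hφ2 b hb, χapply, χapply,
          h₂ b hb, sub_self]
    · intro hle
      constructor
      · intro a ha
        have := hle (le_sup_left (a := M₁) (b := M₂) ha)
        rw [LinearMap.mem_ker, LinearMap.sub_apply, hφ1 a ha, χapply, χapply,
          sub_eq_zero] at this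
        exact Additive.ofMul.injective this
      · intro b hb
        have := hle (le_sup_right (a := M₁) (b := M₂) hb)
        rw [LinearMap.mem_ker, LinearMap.sub_apply, hφ2 b hb, χapply, χapply,
          sub_eq_zero] at this
        exact Additive.ofMul.injective this
  -- equivalence of S with linear maps from the quotient
  let T := Q →ₗ[ℤ] A
  let e : S ≃ T :=
    { toFun := fun x => M.liftQ (χe x.1 - φ) ((key x.1).mp x.2)
      invFun := fun g => ⟨χe.symm (g ∘ₗ M.mkQ + φ), by
        rw [key]
        intro m hm
        rw [LinearMap.mem_ker, LinearMap.sub_apply, Equiv.apply_symm_apply,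
          LinearMap.add_apply, LinearMap.comp_apply, Submodule.mkQ_apply]
        rw [(Submodule.Quotient.mk_eq_zero M).mpr hm]
        simp⟩
      left_inv := by
        rintro ⟨x, hx⟩
        ext1
        dsimp only
        rw [Equiv.symm_apply_eq, Submodule.liftQ_mkQ, sub_add_cancel]
      right_inv := by
        intro g
        refine Submodule.linearMap_qext M ?_
        rw [Submodule.liftQ_mkQ, Equiv.apply_symm_apply, add_sub_cancel_right] }
  -- finiteness and cardinality via duality
  have hQfin : Finite Q := by
    rw [hidx] at hfin
    exact (Nat.card_ne_zero.mp hfin).2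
  let G := Multiplicative Q
  haveI : Finite G := Finite.of_equiv Q Multiplicative.ofAdd
  haveI : NeZero ((Monoid.exponent G : ℕ) : ℂ) :=
    ⟨Nat.cast_ne_zero.mpr Monoid.exponent_ne_zero_of_finite⟩
  obtain ⟨d⟩ := CommGroup.monoidHom_mulEquiv_of_hasEnoughRootsOfUnity G ℂ
  let e1 : (Q →+ A) ≃ T := (addMonoidHomLequivInt (A := Q) (B := A) ℤ).toEquiv
  let e2 : (Q →+ A) ≃ (G →* Multiplicative A) := AddMonoidHom.toMultiplicative
  let e3 := MulEquiv.monoidHomCongrRight (M := G) (MulEquiv.multiplicativeAdditive ℂˣ)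
  have hcard : Nat.card T = Nat.card Q := by
    rw [← Nat.card_congr e1, Nat.card_congr e2, Nat.card_congr e3.toEquiv,
      Nat.card_congr d.toEquiv]
    exact Nat.card_congr Multiplicative.ofAdd.symm
  have hTfin : Finite T := Nat.finite_of_card_ne_zero (by rw [hcard, ← hidx]; exact hfin)
  have hSfin : S.Finite := by
    have : Finite S := Finite.of_equiv T e.symm
    exact Set.finite_coe_iff.mp this
  refine ⟨hSfin, ?_⟩
  rw [← Nat.card_coe_set_eq, Nat.card_congr e, hcard, hidx]
end

section
/- Let A be an n × n integer matrix with det A ≠ 0 and let c ∈ (ℂˣ)^n. Then the set of solutions x ∈ (ℂˣ)^n of the system of monomial equations ∏_{j=1}^n x_j^{A_{ij}} = c_i (for i = 1, …, n) is finite and has exactly |det A| elements. Equivalently, the monomial map φ_A : (ℂˣ)^n → (ℂˣ)^n with φ_A(x)_i = ∏_j x_j^{A_{ij}} is surjective and every fiber has cardinality |det A|. -/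
open Matrix

private lemma zpow_finsum {G : Type*} [CommGroup G] (x : G) {ι : Type*} (s : Finset ι)
    (f : ι → ℤ) : x ^ (∑ i ∈ s, f i) = ∏ i ∈ s, x ^ f i := by
  induction s using Finset.cons_induction with
  | empty => simp
  | cons a s ha ih => rw [Finset.sum_cons, Finset.prod_cons, _root_.zpow_add, ih]

/-- The monomial map associated to an integer matrix. -/
private def phi {n : ℕ} (B : Matrix (Fin n) (Fin n) ℤ) (x : Fin n → ℂˣ) : Fin n → ℂˣ :=
  fun i => ∏ j, x j ^ B i j

private lemma phi_mul {n : ℕ} (B C : Matrix (Fin n) (Fin n) ℤ) (x : Fin n → ℂˣ) :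
    phi (B * C) x = phi B (phi C x) := by
  funext i
  simp only [phi, Matrix.mul_apply]
  have : ∀ k, (∏ j, x j ^ C k j) ^ B i k = ∏ j, x j ^ (B i k * C k j) := by
    intro k
    rw [← Finset.prod_zpow]
    exact Finset.prod_congr rfl fun j _ => by rw [← _root_.zpow_mul, mul_comm]
  simp only [this]
  rw [Finset.prod_comm]
  exact Finset.prod_congr rfl fun j _ => (zpow_finsum _ _ _)

private lemma phi_one {n : ℕ} (x : Fin n → ℂˣ) : phi (1 : Matrix (Fin n) (Fin n) ℤ) x = x := by
  funext i
  simp only [phi, Matrix.one_apply]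
  rw [Finset.prod_eq_single i (fun j _ hj => by simp [Ne.symm hj]) (by simp)]
  simp

private lemma finite_ncard_pow_nat {k : ℕ} (hk : k ≠ 0) (b : ℂˣ) :
    {z : ℂˣ | z ^ k = b}.Finite ∧ {z : ℂˣ | z ^ k = b}.ncard = k := by
  haveI : NeZero k := ⟨hk⟩
  obtain ⟨w, hw⟩ := IsAlgClosed.exists_pow_nat_eq (k := ℂ) (b : ℂ) (Nat.pos_of_ne_zero hk)
  have hw0 : w ≠ 0 := by
    rintro rfl
    rw [zero_pow hk] at hw
    exact b.ne_zero hw.symm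
  set wu : ℂˣ := Units.mk0 w hw0 with hwu_def
  have hwu : wu ^ k = b := Units.ext (by push_cast [hwu_def]; exact hw)
  have hset : {z : ℂˣ | z ^ k = b} = (fun u => u * wu) '' ((rootsOfUnity k ℂ : Subgroup ℂˣ) : Set ℂˣ) := by
    ext z
    simp only [Set.mem_setOf_eq, Set.mem_image, SetLike.mem_coe, mem_rootsOfUnity]
    constructor
    · intro h
      refine ⟨z * wu⁻¹, ?_, by group⟩
      rw [mul_pow, h, ← hwu, inv_pow, mul_inv_cancel]
    · rintro ⟨u, hu, rfl⟩
      rw [mul_pow, hu, one_mul, hwu]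
  have hinj : Function.Injective (fun u : ℂˣ => u * wu) := fun a b h => by
    simpa using mul_right_cancel h
  haveI : Finite ((rootsOfUnity k ℂ : Subgroup ℂˣ) : Set ℂˣ) :=
    inferInstanceAs (Finite (rootsOfUnity k ℂ))
  have hfin : ((rootsOfUnity k ℂ : Subgroup ℂˣ) : Set ℂˣ).Finite := Set.toFinite _
  constructor
  · rw [hset]; exact hfin.image _
  · rw [hset, Set.ncard_image_of_injective _ hinj, ← Nat.card_coe_set_eq]
    have h1 : Nat.card ((rootsOfUnity k ℂ : Subgroup ℂˣ) : Set ℂˣ) = Nat.card (rootsOfUnity k ℂ) :=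
      rfl
    rw [h1, Complex.card_rootsOfUnity]

private lemma finite_ncard_zpow {m : ℤ} (hm : m ≠ 0) (b : ℂˣ) :
    {z : ℂˣ | z ^ m = b}.Finite ∧ {z : ℂˣ | z ^ m = b}.ncard = m.natAbs := by
  have hk : m.natAbs ≠ 0 := Int.natAbs_ne_zero.mpr hm
  rcases Int.natAbs_eq m with h | h
  · have : {z : ℂˣ | z ^ m = b} = {z : ℂˣ | z ^ m.natAbs = b} := by
      ext z
      constructor
      · intro hz; rw [Set.mem_setOf_eq, ← zpow_natCast, ← h]; exact hz
      · intro hz; rw [Set.mem_setOf_eq, h, zpow_natCast]; exact hz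
    rw [this]; exact finite_ncard_pow_nat hk b
  · have : {z : ℂˣ | z ^ m = b} = {z : ℂˣ | z ^ m.natAbs = b⁻¹} := by
      ext z
      have : z ^ m = (z ^ m.natAbs)⁻¹ := by rw [← zpow_natCast, ← _root_.zpow_neg, ← h]
      constructor
      · intro hz
        rw [Set.mem_setOf_eq] at hz ⊢
        rw [this] at hz
        rw [← hz, inv_inv]
      · intro hz
        rw [Set.mem_setOf_eq] at hz ⊢
        rw [this, hz, inv_inv]
    rw [this]; exact finite_ncard_pow_nat hk b⁻¹

private lemma finite_ncard_pi {n : ℕ} {E : Fin n → Set ℂˣ} (hf : ∀ j, (E j).Finite) :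
    (Set.pi Set.univ E).Finite ∧ (Set.pi Set.univ E).ncard = ∏ j, (E j).ncard := by
  refine ⟨Set.Finite.pi hf, ?_⟩
  rw [← Nat.card_coe_set_eq, Nat.card_congr (Equiv.Set.univPi E), Nat.card_pi]
  exact Finset.prod_congr rfl fun j _ => Nat.card_coe_set_eq (E j)

private lemma phi_eq_of_entries {n : ℕ} {B : Matrix (Fin n) (Fin n) ℤ} {e : Equiv.Perm (Fin n)}
    {a : Fin n → ℤ} (hB : ∀ i j, B i j = if i = e j then a j else 0) (y : Fin n → ℂˣ) (i : Fin n) :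
    phi B y i = y (e.symm i) ^ a (e.symm i) := by
  simp only [phi]
  rw [Finset.prod_eq_single (e.symm i)]
  · rw [hB, if_pos (by simp)]
  · intro j _ hj
    rw [hB, if_neg, zpow_zero]
    intro hij
    exact hj (by rw [hij]; simp)
  · simp

/-- **Solutions of a nondegenerate monomial system.** Let `A` be an `n × n` integer matrix with
`det A ≠ 0` and `c ∈ (ℂˣ)^n`. Then the set of solutions `x ∈ (ℂˣ)^n` of the system
`∏_j x_j ^ A i j = c i` (for `i = 1, …, n`) is finite with exactly `|det A|` elements. -/
theorem card_solutions_monomial_system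
    (n : ℕ) (A : Matrix (Fin n) (Fin n) ℤ) (hA : A.det ≠ 0) (c : Fin n → ℂˣ)
    (S : Set (Fin n → ℂˣ)) (hS : S = {x | ∀ i, ∏ j, x j ^ A i j = c i}) :
    S.Finite ∧ S.ncard = A.det.natAbs := by
  classical
  subst hS
  -- the linear map given by `A`
  set T : (Fin n → ℤ) →ₗ[ℤ] (Fin n → ℤ) := Matrix.toLin' A with hT
  have hTinj : Function.Injective T := by
    rw [← LinearMap.ker_eq_bot, Submodule.eq_bot_iff]
    intro v hv
    have h0 : A.mulVec v = 0 := by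
      simpa [hT, Matrix.toLin'_apply] using hv
    have h1 : A.det • v = 0 := by
      have h2 := congrArg (fun w => A.adjugate.mulVec w) h0
      simpa [Matrix.mulVec_mulVec, Matrix.adjugate_mul, Matrix.smul_mulVec,
        Matrix.one_mulVec] using h2
    rcases smul_eq_zero.mp h1 with h | h
    · exact absurd h hA
    · exact h
  set std : Module.Basis (Fin n) ℤ (Fin n → ℤ) := Pi.basisFun ℤ (Fin n) with hstd
  set N : Submodule ℤ (Fin n → ℤ) := LinearMap.range T with hN
  obtain ⟨m, snf⟩ := N.smithNormalForm std
  obtain ⟨bM, bN, f, a, hsnf⟩ := snf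
  set g : (Fin n → ℤ) ≃ₗ[ℤ] N := LinearEquiv.ofInjective T hTinj with hg
  have hmn : m = n := by
    have e1 := Module.Basis.indexEquiv (bN.map g.symm) std
    simpa using (Fintype.card_congr e1)
  subst hmn
  set e : Fin m ≃ Fin m :=
    Equiv.ofBijective f ((Finite.injective_iff_bijective).mp f.injective) with he
  have hef : ∀ j, e j = f j := fun j => rfl
  -- a j ≠ 0
  have ha : ∀ j, a j ≠ 0 := by
    intro j hj
    apply bN.ne_zero j
    have := hsnf j
    rw [hj, zero_smul] at this
    exact Subtype.ext this
  -- matrix factorization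
  set P : Matrix (Fin m) (Fin m) ℤ := LinearMap.toMatrix bM std LinearMap.id with hP
  set Q : Matrix (Fin m) (Fin m) ℤ := LinearMap.toMatrix std bM LinearMap.id with hQ
  set D : Matrix (Fin m) (Fin m) ℤ := LinearMap.toMatrix bN bM N.subtype with hD
  set W : Matrix (Fin m) (Fin m) ℤ :=
    LinearMap.toMatrix std bN (g : (Fin m → ℤ) →ₗ[ℤ] N) with hW
  set V : Matrix (Fin m) (Fin m) ℤ :=
    LinearMap.toMatrix bN std (g.symm : N →ₗ[ℤ] (Fin m → ℤ)) with hV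
  have hTfact : T = (LinearMap.id.comp N.subtype).comp (g : (Fin m → ℤ) →ₗ[ℤ] N) := by
    refine LinearMap.ext fun v => ?_
    rw [hg]
    exact (LinearEquiv.ofInjective_apply (f := T) (h := hTinj) v).symm
  have hfact : A = P * D * W := by
    have h3 : A = LinearMap.toMatrix std std T := by
      rw [hT, hstd, LinearMap.toMatrix_eq_toMatrix', LinearMap.toMatrix'_toLin']
    rw [h3, hTfact, LinearMap.toMatrix_comp std bN std, LinearMap.toMatrix_comp bN bM std]
  -- entries of D
  have hDij : ∀ i j, D i j = if i = e j then a j else 0 := by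
    intro i j
    rw [hD, LinearMap.toMatrix_apply, Submodule.coe_subtype, hsnf j, _root_.map_smul,
      Module.Basis.repr_self, ← hef j]
    simp [Finsupp.single_apply, eq_comm]
  have hDfact : D = (Equiv.Perm.permMatrix ℤ e.symm) * Matrix.diagonal a := by
    ext i j
    rw [Matrix.mul_diagonal, hDij]
    simp only [Equiv.Perm.permMatrix, PEquiv.toMatrix_apply, Equiv.toPEquiv_apply,
      Option.mem_def, Option.some.injEq]
    by_cases h : i = e j
    · rw [if_pos h, if_pos (by rw [h]; simp), one_mul]
    · rw [if_neg h, if_neg, zero_mul]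
      intro hc
      exact h (by rw [← hc]; simp)
  -- invertibility of P and W
  have hPQ : P * Q = 1 := by
    rw [hP, hQ, ← LinearMap.toMatrix_comp std bM std, LinearMap.id_comp,
      LinearMap.toMatrix_id]
  have hQP : Q * P = 1 := by
    rw [hP, hQ, ← LinearMap.toMatrix_comp bM std bM, LinearMap.id_comp,
      LinearMap.toMatrix_id]
  have hWV : W * V = 1 := by
    rw [hW, hV, ← LinearMap.toMatrix_comp bN std bN]
    have h5 : (g : (Fin m → ℤ) →ₗ[ℤ] N).comp (g.symm : N →ₗ[ℤ] (Fin m → ℤ)) = LinearMap.id := by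
      ext v; simp
    rw [h5, LinearMap.toMatrix_id]
  have hVW : V * W = 1 := by
    rw [hW, hV, ← LinearMap.toMatrix_comp std bN std]
    have h5 : (g.symm : N →ₗ[ℤ] (Fin m → ℤ)).comp (g : (Fin m → ℤ) →ₗ[ℤ] N) = LinearMap.id := by
      ext v; simp
    rw [h5, LinearMap.toMatrix_id]
  have hPunit : IsUnit P := ⟨⟨P, Q, hPQ, hQP⟩, rfl⟩
  have hWunit : IsUnit W := ⟨⟨W, V, hWV, hVW⟩, rfl⟩
  have hPdet : IsUnit P.det := by
    simpa using hPunit.map Matrix.detMonoidHom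
  have hWdet : IsUnit W.det := by
    simpa using hWunit.map Matrix.detMonoidHom
  -- determinant computation
  have hdet : A.det.natAbs = ∏ j, (a j).natAbs := by
    rw [hfact, Matrix.det_mul, Matrix.det_mul, hDfact, Matrix.det_mul,
      Matrix.det_permutation, Matrix.det_diagonal]
    have hprod : (∏ j, a j).natAbs = ∏ j, (a j).natAbs := by
      exact map_prod Int.natAbsHom a Finset.univ
    rw [Int.natAbs_mul, Int.natAbs_mul, Int.natAbs_mul, hprod,
      Int.natAbs_of_isUnit hPdet, Int.natAbs_of_isUnit hWdet]
    simp [Int.cast_id, Int.units_natAbs]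
  -- cancellation lemmas for the monomial maps
  have hPc1 : ∀ y, phi P⁻¹ (phi P y) = y := fun y => by
    rw [← phi_mul, Matrix.nonsing_inv_mul P hPdet, phi_one]
  have hPc2 : ∀ y, phi P (phi P⁻¹ y) = y := fun y => by
    rw [← phi_mul, Matrix.mul_nonsing_inv P hPdet, phi_one]
  have hWc1 : ∀ y, phi W⁻¹ (phi W y) = y := fun y => by
    rw [← phi_mul, Matrix.nonsing_inv_mul W hWdet, phi_one]
  have hWc2 : ∀ y, phi W (phi W⁻¹ y) = y := fun y => by
    rw [← phi_mul, Matrix.mul_nonsing_inv W hWdet, phi_one]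
  set c1 : Fin m → ℂˣ := phi P⁻¹ c with hc1
  have hSiff : ∀ x : Fin m → ℂˣ, (∀ i, ∏ j, x j ^ A i j = c i) ↔ phi D (phi W x) = c1 := by
    intro x
    have h4 : (∀ i, ∏ j, x j ^ A i j = c i) ↔ phi A x = c := by
      rw [funext_iff]; rfl
    rw [h4, hfact, phi_mul, phi_mul, hc1]
    constructor
    · intro h
      rw [← h, hPc1]
    · intro h
      rw [h, hPc2]
  set E : Fin m → Set ℂˣ := fun j => {z : ℂˣ | z ^ a j = c1 (e j)} with hE
  have hTset : ∀ y : Fin m → ℂˣ, phi D y = c1 ↔ y ∈ Set.pi Set.univ E := by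
    intro y
    simp only [Set.mem_pi, Set.mem_univ, true_implies, hE, Set.mem_setOf_eq, funext_iff]
    constructor
    · intro h j
      have h5 := h (e j)
      rw [phi_eq_of_entries hDij] at h5
      simpa using h5
    · intro h i
      rw [phi_eq_of_entries hDij]
      simpa using h (e.symm i)
  have hEfin : ∀ j, (E j).Finite := fun j => (finite_ncard_zpow (ha j) (c1 (e j))).1
  have hEcard : ∀ j, (E j).ncard = (a j).natAbs := fun j =>
    (finite_ncard_zpow (ha j) (c1 (e j))).2
  obtain ⟨hTfin, hTcard⟩ := finite_ncard_pi hEfin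
  -- S is the image of the pi-set under the bijection `phi W⁻¹`
  have hWinj : Function.Injective (phi W⁻¹) := by
    intro u v huv
    have h6 := congrArg (phi W) huv
    rwa [hWc2, hWc2] at h6
  have hSimg : {x : Fin m → ℂˣ | ∀ i, ∏ j, x j ^ A i j = c i}
      = phi W⁻¹ '' (Set.pi Set.univ E) := by
    ext x
    rw [Set.mem_setOf_eq, hSiff x]
    constructor
    · intro h
      exact ⟨phi W x, (hTset (phi W x)).mp h, hWc1 x⟩
    · rintro ⟨y, hy, rfl⟩
      rw [hWc2]
      exact (hTset y).mpr hy
  rw [hSimg]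
  refine ⟨hTfin.image _, ?_⟩
  rw [Set.ncard_image_of_injective _ hWinj, hTcard, hdet]
  exact Finset.prod_congr rfl fun j _ => hEcard j
end

section
/- Tropicalization of a hypersurface with constant coefficients: Let K be an algebraically closed field equipped with a surjective group homomorphism v : Kˣ → (ℚ, +) satisfying v(x + y) ≥ min(v(x), v(y)) whenever x, y, x + y ∈ Kˣ. Let A ⊆ ℤ^n be a finite set with at least two elements, and for each ω ∈ A let a_ω ∈ Kˣ with v(a_ω) = 0. Let f be the Laurent polynomial f(x) = Σ_{ω ∈ A} a_ω x^ω. Then { v(x) : x ∈ (Kˣ)^n, f(x) = 0 } = { w ∈ ℚ^n : the minimum of ⟨ω, w⟩ over ω ∈ A is attained by at least two distinct elements ω ∈ A }, where ⟨ω, w⟩ = Σ_i ω_i w_i. -/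
namespace TropAux
variable {K : Type*} [Field K]

open scoped Classical in
/-- Extension of `v` to `K`, sending `0` to `⊤`. -/
noncomputable def V (v : Kˣ → ℚ) (x : K) : WithTop ℚ :=
  if h : x = 0 then ⊤ else ((v (Units.mk0 x h) : ℚ) : WithTop ℚ)

theorem V_zero (v : Kˣ → ℚ) : V v (0 : K) = ⊤ := by simp [V]

theorem V_eq_top_iff (v : Kˣ → ℚ) (x : K) : V v x = ⊤ ↔ x = 0 := by
  classical
  unfold V; split
  · simpa
  · simp_all

theorem V_unit (v : Kˣ → ℚ) (u : Kˣ) : V v (u : K) = (v u : WithTop ℚ) := by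
  have h : (u : K) ≠ 0 := u.ne_zero
  classical
  rw [V, dif_neg h]
  congr 1
  exact congrArg v (Units.ext (by simp))

theorem V_mul (v : Kˣ → ℚ) (hv_mul : ∀ x y : Kˣ, v (x * y) = v x + v y) (x y : K) :
    V v (x * y) = V v x + V v y := by
  by_cases hx : x = 0
  · simp [hx, V_zero]
  by_cases hy : y = 0
  · simp [hy, V_zero]
  have hxy : x * y ≠ 0 := mul_ne_zero hx hy
  classical
  have : Units.mk0 (x*y) hxy = Units.mk0 x hx * Units.mk0 y hy := Units.ext (by simp)
  rw [V, dif_neg hxy, this, hv_mul, V, dif_neg hx, V, dif_neg hy]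
  push_cast
  rfl

theorem v_one (v : Kˣ → ℚ) (hv_mul : ∀ x y : Kˣ, v (x * y) = v x + v y) : v 1 = 0 := by
  have := hv_mul 1 1; simp at this; linarith

theorem V_one (v : Kˣ → ℚ) (hv_mul : ∀ x y : Kˣ, v (x * y) = v x + v y) : V v (1 : K) = 0 := by
  rw [show (1:K) = ((1:Kˣ):K) by simp, V_unit, v_one v hv_mul]; rfl

theorem V_neg (v : Kˣ → ℚ) (hv_mul : ∀ x y : Kˣ, v (x * y) = v x + v y) (x : K) :
    V v (-x) = V v x := by
  have hm1 : v (-1 : Kˣ) = 0 := by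
    have := hv_mul (-1) (-1); simp at this
    have h1 := v_one v hv_mul; rw [h1] at this; linarith
  have : -x = ((-1 : Kˣ) : K) * x := by simp
  rw [this, V_mul v hv_mul, V_unit, hm1]
  simp

theorem V_add (v : Kˣ → ℚ)
    (hv_ultra : ∀ x y z : Kˣ, (x : K) + (y : K) = (z : K) → min (v x) (v y) ≤ v z)
    (x y : K) : min (V v x) (V v y) ≤ V v (x + y) := by
  by_cases hx : x = 0
  · simp [hx, V_zero]
  by_cases hy : y = 0
  · simp [hy, V_zero]
  by_cases hxy : x + y = 0
  · simp [hxy, V_zero]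
  classical
  have h := hv_ultra (Units.mk0 x hx) (Units.mk0 y hy) (Units.mk0 (x+y) hxy) (by simp)
  rw [V, dif_neg hx, V, dif_neg hy, V, dif_neg hxy]
  rw [← WithTop.coe_min]
  exact_mod_cast h

theorem V_add_eq_left (v : Kˣ → ℚ)
    (hv_mul : ∀ x y : Kˣ, v (x * y) = v x + v y)
    (hv_ultra : ∀ x y z : Kˣ, (x : K) + (y : K) = (z : K) → min (v x) (v y) ≤ v z)
    (x y : K) (h : V v x < V v y) : V v (x + y) = V v x := by
  have h1 : V v x ≤ V v (x + y) := by
    have := V_add v hv_ultra x y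
    rwa [min_eq_left h.le] at this
  have h2 : V v (x + y) ≤ V v x := by
    have hx : x = (x + y) + (-y) := by ring
    have := V_add v hv_ultra (x + y) (-y)
    rw [← hx, V_neg v hv_mul] at this
    rcases min_le_iff.mp this with h' | h'
    · exact h'
    · exact absurd (lt_of_lt_of_le h h') (lt_irrefl _)
  exact le_antisymm h2 h1

theorem le_V_sum (v : Kˣ → ℚ)
    (hv_ultra : ∀ x y z : Kˣ, (x : K) + (y : K) = (z : K) → min (v x) (v y) ≤ v z)
    {ι : Type*} (s : Finset ι) (f : ι → K) (μ : WithTop ℚ)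
    (h : ∀ j ∈ s, μ ≤ V v (f j)) : μ ≤ V v (∑ j ∈ s, f j) := by
  classical
  induction s using Finset.induction_on with
  | empty => simp [V_zero]
  | @insert a s' hne ih =>
    rw [Finset.sum_insert hne]
    refine le_trans ?_ (V_add v hv_ultra _ _)
    exact le_min (h a (Finset.mem_insert_self a s'))
      (ih fun j hj => h j (Finset.mem_insert_of_mem hj))

theorem V_sum_eq (v : Kˣ → ℚ)
    (hv_mul : ∀ x y : Kˣ, v (x * y) = v x + v y)
    (hv_ultra : ∀ x y z : Kˣ, (x : K) + (y : K) = (z : K) → min (v x) (v y) ≤ v z)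
    {ι : Type*} [DecidableEq ι] (s : Finset ι) (f : ι → K) (i : ι) (hi : i ∈ s)
    (h : ∀ j ∈ s, j ≠ i → V v (f i) < V v (f j)) :
    V v (∑ j ∈ s, f j) = V v (f i) := by
  have hsplit : ∑ j ∈ s, f j = f i + ∑ j ∈ s.erase i, f j := by
    rw [← Finset.sum_erase_add s f hi]; ring
  rcases (s.erase i).eq_empty_or_nonempty with he | he
  · rw [hsplit, he]; simp
  · obtain ⟨j0, hj0⟩ := he
    have htop : V v (f i) ≠ ⊤ :=
      ne_top_of_lt (h j0 (Finset.mem_of_mem_erase hj0) (Finset.ne_of_mem_erase hj0))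
    rw [hsplit]
    apply V_add_eq_left v hv_mul hv_ultra
    set μ := (s.erase i).inf fun j => V v (f j) with hμ
    have hlt : V v (f i) < μ := by
      rw [hμ, Finset.lt_inf_iff (lt_top_iff_ne_top.mpr htop)]
      intro j hj
      exact h j (Finset.mem_of_mem_erase hj) (Finset.ne_of_mem_erase hj)
    exact lt_of_lt_of_le hlt (le_V_sum v hv_ultra _ _ μ fun j hj => Finset.inf_le hj)


open Polynomial

/-- `q` has a unique coefficient of minimal valuation. -/
def UMin (v : Kˣ → ℚ) (q : K[X]) : Prop :=
  ∃ k, ∀ l, l ≠ k → V v (q.coeff k) < V v (q.coeff l)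

theorem umin_C (v : Kˣ → ℚ) {c : K} (hc : c ≠ 0) : UMin v (C c) := by
  refine ⟨0, fun l hl => ?_⟩
  simp only [coeff_C, if_neg hl, if_pos rfl, V_zero]
  exact lt_top_iff_ne_top.mpr (by rwa [ne_eq, V_eq_top_iff])

theorem umin_mul (v : Kˣ → ℚ)
    (hv_mul : ∀ x y : Kˣ, v (x * y) = v x + v y)
    (hv_ultra : ∀ x y z : Kˣ, (x : K) + (y : K) = (z : K) → min (v x) (v y) ≤ v z)
    {q : K[X]} (hq : UMin v q) (r : K) (hr : V v r ≠ 0) :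
    UMin v ((X - C r) * q) := by
  obtain ⟨k, hk⟩ := hq
  have hcoeff : ∀ m, ((X - C r) * q).coeff m
      = (if m = 0 then 0 else q.coeff (m - 1)) + (-r) * q.coeff m := by
    intro m
    rw [sub_mul, coeff_sub]
    cases m with
    | zero => simp [coeff_C_mul]
    | succ m =>
      rw [coeff_X_mul, coeff_C_mul, if_neg (Nat.succ_ne_zero m), Nat.succ_sub_one]
      ring
  set μ := V v (q.coeff k) with hμ
  have hμtop : μ ≠ ⊤ := by
    intro htop
    have := hk (k+1) (by omega)
    rw [htop] at this
    exact not_top_lt this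
  have hall : ∀ l, μ ≤ V v (q.coeff l) := by
    intro l
    rcases eq_or_ne l k with h | h
    · rw [h]
    · exact (hk l h).le
  rcases lt_or_gt_of_ne hr with hneg | hpos
  · -- V r < 0 : new unique min at k, with value V r + μ
    refine ⟨k, fun l hl => ?_⟩
    have hmain : V v (((X - C r) * q).coeff k) = V v r + μ := by
      rw [hcoeff k]
      have h2 : V v ((-r) * q.coeff k) = V v r + μ := by
        rw [V_mul v hv_mul, V_neg v hv_mul]
      rcases eq_or_ne k 0 with h0 | h0
      · rw [if_pos h0, zero_add, h2]
      · rw [if_neg h0, add_comm, V_add_eq_left v hv_mul hv_ultra _ _ ?_, h2]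
        rw [h2]
        calc V v r + μ < 0 + μ := by
              apply WithTop.add_lt_add_right hμtop hneg
          _ = μ := by rw [zero_add]
          _ ≤ V v (q.coeff (k-1)) := hall _
    rw [hmain]
    -- other coefficients have valuation > V r + μ
    rw [hcoeff l]
    have hb1 : V v r + μ < V v ((if l = 0 then (0:K) else q.coeff (l - 1))) := by
      split
      · rw [V_zero]; exact lt_top_iff_ne_top.mpr (WithTop.add_ne_top.mpr ⟨ne_top_of_lt hneg, hμtop⟩)
      · calc V v r + μ < 0 + μ := WithTop.add_lt_add_right hμtop hneg
          _ = μ := by rw [zero_add]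
          _ ≤ _ := hall _
    have hb2 : V v r + μ < V v ((-r) * q.coeff l) := by
      rw [V_mul v hv_mul, V_neg v hv_mul]
      exact WithTop.add_lt_add_left (ne_top_of_lt hneg) (hk l hl)
    exact lt_of_lt_of_le (lt_min hb1 hb2) (V_add v hv_ultra _ _)
  · -- V r > 0 : new unique min at k+1, with value μ
    refine ⟨k + 1, fun l hl => ?_⟩
    have hmain : V v (((X - C r) * q).coeff (k+1)) = μ := by
      rw [hcoeff (k+1), if_neg (by omega)]
      simp only [Nat.add_sub_cancel]
      rw [V_add_eq_left v hv_mul hv_ultra _ _ ?_]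
      rw [← hμ, V_mul v hv_mul, V_neg v hv_mul]
      calc μ = 0 + μ := (zero_add μ).symm
        _ < V v r + μ := WithTop.add_lt_add_right hμtop hpos
        _ ≤ V v r + V v (q.coeff (k+1)) := by
              exact add_le_add le_rfl (hall _)
    rw [hmain]
    rw [hcoeff l]
    have hb1 : μ < V v ((if l = 0 then (0:K) else q.coeff (l - 1))) := by
      split
      · rw [V_zero]; exact lt_top_iff_ne_top.mpr hμtop
      · rename_i h0
        exact hk (l-1) (by omega)
    have hb2 : μ < V v ((-r) * q.coeff l) := by
      rw [V_mul v hv_mul, V_neg v hv_mul]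
      calc μ = 0 + μ := (zero_add μ).symm
        _ < V v r + μ := WithTop.add_lt_add_right hμtop hpos
        _ ≤ V v r + V v (q.coeff l) := add_le_add le_rfl (hall _)
    exact lt_of_lt_of_le (lt_min hb1 hb2) (V_add v hv_ultra _ _)

theorem umin_prod (v : Kˣ → ℚ)
    (hv_mul : ∀ x y : Kˣ, v (x * y) = v x + v y)
    (hv_ultra : ∀ x y z : Kˣ, (x : K) + (y : K) = (z : K) → min (v x) (v y) ≤ v z)
    (M : Multiset K) (hM : ∀ r ∈ M, V v r ≠ 0) {c : K} (hc : c ≠ 0) :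
    UMin v (C c * (M.map fun r => X - C r).prod) := by
  induction M using Multiset.induction_on with
  | empty => simpa using umin_C v hc
  | cons r M ih =>
    have h1 : C c * ((r ::ₘ M).map fun r => X - C r).prod
        = (X - C r) * (C c * (M.map fun r => X - C r).prod) := by
      rw [Multiset.map_cons, Multiset.prod_cons]; ring
    rw [h1]
    exact umin_mul v hv_mul hv_ultra
      (ih fun s hs => hM s (Multiset.mem_cons_of_mem hs)) r
      (hM r (Multiset.mem_cons_self r M))

theorem exists_root_V_eq_zero [IsAlgClosed K] (v : Kˣ → ℚ)
    (hv_mul : ∀ x y : Kˣ, v (x * y) = v x + v y)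
    (hv_ultra : ∀ x y z : Kˣ, (x : K) + (y : K) = (z : K) → min (v x) (v y) ≤ v z)
    (p : K[X]) (i j : ℕ) (hij : i ≠ j)
    (hi : p.coeff i ≠ 0) (hj : p.coeff j ≠ 0)
    (heq : V v (p.coeff i) = V v (p.coeff j))
    (hmin : ∀ k, V v (p.coeff i) ≤ V v (p.coeff k)) :
    ∃ r : K, p.eval r = 0 ∧ V v r = 0 := by
  by_contra hcon
  push_neg at hcon
  have hp0 : p ≠ 0 := fun h => hi (by simp [h])
  have hfac : p = C p.leadingCoeff * (p.roots.map fun a => X - C a).prod :=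
    (IsAlgClosed.splits p).eq_prod_roots
  have hroots : ∀ r ∈ p.roots, V v r ≠ 0 := by
    intro r hr
    exact hcon r (Polynomial.isRoot_of_mem_roots hr)
  have humin : UMin v p := by
    rw [hfac]
    exact umin_prod v hv_mul hv_ultra _ hroots (Polynomial.leadingCoeff_ne_zero.mpr hp0)
  obtain ⟨k, hk⟩ := humin
  rcases eq_or_ne k i with rfl | hki
  · have := hk j (Ne.symm hij)
    rw [← heq] at this
    exact lt_irrefl _ this
  · exact lt_irrefl _ (lt_of_le_of_lt (hmin k) (hk i (Ne.symm hki)))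


theorem v_zpow (v : Kˣ → ℚ) (hv_mul : ∀ x y : Kˣ, v (x * y) = v x + v y)
    (x : Kˣ) (m : ℤ) : v (x ^ m) = (m : ℚ) * v x := by
  let φ : Kˣ →* Multiplicative ℚ :=
    MonoidHom.mk' (fun u => Multiplicative.ofAdd (v u)) (fun a b => by simp [hv_mul])
  have h := map_zpow φ x m
  have h2 : Multiplicative.toAdd (φ (x ^ m)) = v (x ^ m) := rfl
  rw [h, toAdd_zpow] at h2
  have h3 : Multiplicative.toAdd (φ x) = v x := rfl
  rw [h3] at h2
  rw [← h2, zsmul_eq_mul]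

theorem v_prod (v : Kˣ → ℚ) (hv_mul : ∀ x y : Kˣ, v (x * y) = v x + v y)
    {ι : Type*} (s : Finset ι) (f : ι → Kˣ) : v (∏ i ∈ s, f i) = ∑ i ∈ s, v (f i) := by
  let φ : Kˣ →* Multiplicative ℚ :=
    MonoidHom.mk' (fun u => Multiplicative.ofAdd (v u)) (fun a b => by simp [hv_mul])
  have h := map_prod φ f s
  have h2 : Multiplicative.toAdd (φ (∏ i ∈ s, f i)) = v (∏ i ∈ s, f i) := rfl
  rw [h, toAdd_prod] at h2
  exact h2.symm

theorem zpow_finset_sum {G : Type*} [CommGroup G] (T : G) {ι : Type*} (s : Finset ι)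
    (f : ι → ℤ) : T ^ (∑ i ∈ s, f i) = ∏ i ∈ s, T ^ f i := by
  classical
  induction s using Finset.induction_on with
  | empty => simp
  | @insert a s' hne ih => rw [Finset.sum_insert hne, Finset.prod_insert hne, zpow_add, ih]

theorem coe_term {n : ℕ} (a : Kˣ) (x : Fin n → Kˣ) (ω : Fin n → ℤ) :
    ((a * ∏ i, x i ^ ω i : Kˣ) : K) = (a : K) * ∏ i, (x i : K) ^ ω i := by
  rw [Units.val_mul]
  congr 1
  calc ((∏ i, x i ^ ω i : Kˣ) : K) = ∏ i, ((x i ^ ω i : Kˣ) : K) :=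
        map_prod (Units.coeHom K) _ _
    _ = ∏ i, (x i : K) ^ ω i := by
        refine Finset.prod_congr rfl fun i _ => ?_
        exact Units.val_zpow_eq_zpow_val (x i) (ω i)

theorem digits (M : ℤ) : ∀ (n : ℕ) (δ : Fin n → ℤ), (∀ i, 2 * |δ i| < M) →
    (∑ i, δ i * M ^ (i : ℕ)) = 0 → ∀ i, δ i = 0 := by
  intro n
  induction n with
  | zero => intro δ _ _ i; exact i.elim0
  | succ n ih =>
    intro δ hb hs
    have hMpos : 0 < M := lt_of_le_of_lt (by positivity) (hb 0)
    rw [Fin.sum_univ_succ] at hs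
    have hsum2 : ∑ i : Fin n, δ i.succ * M ^ ((i.succ : ℕ)) =
        M * ∑ i : Fin n, δ i.succ * M ^ (i : ℕ) := by
      rw [Finset.mul_sum]
      refine Finset.sum_congr rfl fun i _ => ?_
      rw [Fin.val_succ, pow_succ]
      ring
    rw [hsum2] at hs
    simp only [Fin.val_zero, pow_zero, mul_one] at hs
    have hdvd : M ∣ δ 0 := ⟨-(∑ i : Fin n, δ i.succ * M ^ (i : ℕ)), by linarith⟩
    have h0 : δ 0 = 0 := Int.eq_zero_of_abs_lt_dvd hdvd (by have := hb 0; linarith [abs_nonneg (δ 0)])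
    have hrest : ∑ i : Fin n, δ i.succ * M ^ (i : ℕ) = 0 := by
      rw [h0] at hs
      have : M * ∑ i : Fin n, δ i.succ * M ^ (i : ℕ) = 0 := by linarith
      exact (mul_eq_zero.mp this).resolve_left (by positivity)
    have htail := ih (fun i => δ i.succ) (fun i => hb i.succ) hrest
    intro i
    refine Fin.cases h0 (fun j => htail j) i


open Polynomial in
theorem hard_dir {K : Type*} [Field K] [IsAlgClosed K]
    (v : Kˣ → ℚ)
    (hv_mul : ∀ x y : Kˣ, v (x * y) = v x + v y)
    (hv_surj : Function.Surjective v)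
    (hv_ultra : ∀ x y z : Kˣ, (x : K) + (y : K) = (z : K) → min (v x) (v y) ≤ v z)
    (n : ℕ) (A : Finset (Fin n → ℤ))
    (a : (Fin n → ℤ) → Kˣ) (ha : ∀ ω ∈ A, v (a ω) = 0) (w : Fin n → ℚ)
    (ω₁ : Fin n → ℤ) (hω₁ : ω₁ ∈ A) (ω₂ : Fin n → ℤ) (hω₂ : ω₂ ∈ A) (hne : ω₁ ≠ ω₂)
    (heq : (∑ i, (ω₁ i : ℚ) * w i) = (∑ i, (ω₂ i : ℚ) * w i))
    (hmin : ∀ ω ∈ A, (∑ i, (ω₁ i : ℚ) * w i) ≤ ∑ i, (ω i : ℚ) * w i) :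
    ∃ x : Fin n → Kˣ, (∀ i, v (x i) = w i) ∧
      ∑ ω ∈ A, (a ω : K) * ∏ i, (x i : K) ^ ω i = 0 := by
  classical
  choose t ht using fun i => hv_surj (w i)
  set Cb : ℕ := A.sup fun ω => Finset.univ.sup fun i => (ω i).natAbs with hCb
  set M : ℤ := 4 * (Cb : ℤ) + 2 with hMdef
  have hbound : ∀ ω ∈ A, ∀ i, |ω i| ≤ (Cb : ℤ) := by
    intro ω hω i
    have h1 : (ω i).natAbs ≤ Cb :=
      le_trans (Finset.le_sup (f := fun i => (ω i).natAbs) (Finset.mem_univ i))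
        (Finset.le_sup (f := fun ω => Finset.univ.sup fun i => (ω i).natAbs) hω)
    rw [Int.abs_eq_natAbs]
    exact_mod_cast h1
  set e : (Fin n → ℤ) → ℤ := fun ω => ∑ i, ω i * M ^ (i : ℕ) with hedef
  have hinj : ∀ ω ∈ A, ∀ ω' ∈ A, e ω = e ω' → ω = ω' := by
    intro ω hω ω' hω' hee
    have hz := digits M n (fun i => ω i - ω' i)
      (fun i => by
        have b1 := hbound ω hω i
        have b2 := hbound ω' hω' i
        have b3 : |ω i - ω' i| ≤ |ω i| + |ω' i| := abs_sub (ω i) (ω' i)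
        rw [hMdef]; linarith)
      (by
        have h4 : ∑ i, (ω i - ω' i) * M ^ (i : ℕ)
            = (∑ i, ω i * M ^ (i : ℕ)) - ∑ i, ω' i * M ^ (i : ℕ) := by
          rw [← Finset.sum_sub_distrib]
          exact Finset.sum_congr rfl fun i _ => by ring
        rw [h4]
        exact sub_eq_zero_of_eq hee)
    funext i
    have h5 : ω i - ω' i = 0 := hz i
    linarith
  have hAne : A.Nonempty := ⟨ω₁, hω₁⟩
  set m0 : ℤ := A.inf' hAne e with hm0def
  have hm0 : ∀ ω ∈ A, m0 ≤ e ω := fun ω hω => Finset.inf'_le e hω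
  set E : (Fin n → ℤ) → ℕ := fun ω => (e ω - m0).toNat with hEdef
  have hE : ∀ ω ∈ A, (E ω : ℤ) = e ω - m0 := by
    intro ω hω
    exact Int.toNat_of_nonneg (by linarith [hm0 ω hω])
  have hEinj : ∀ ω ∈ A, ∀ ω' ∈ A, E ω = E ω' → ω = ω' := by
    intro ω hω ω' hω' hEE
    refine hinj ω hω ω' hω' ?_
    have h1 := hE ω hω
    have h2 := hE ω' hω'
    rw [hEE] at h1
    linarith
  set B : (Fin n → ℤ) → Kˣ := fun ω => a ω * ∏ i, t i ^ ω i with hBdef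
  have hvB : ∀ ω ∈ A, v (B ω) = ∑ i, (ω i : ℚ) * w i := by
    intro ω hω
    show v (a ω * ∏ i, t i ^ ω i) = _
    rw [hv_mul, v_prod v hv_mul, ha ω hω, zero_add]
    exact Finset.sum_congr rfl fun i _ => by rw [v_zpow v hv_mul, ht i]
  set p : Polynomial K := ∑ ω ∈ A, Polynomial.C ((B ω : K)) * Polynomial.X ^ (E ω) with hpdef
  have hco : ∀ ω ∈ A, p.coeff (E ω) = (B ω : K) := by
    intro ω hω
    rw [hpdef, finset_sum_coeff]
    rw [Finset.sum_eq_single ω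
      (fun ω' hω' hne' => by
        rw [coeff_C_mul_X_pow]
        refine if_neg ?_
        intro h
        exact hne' (hEinj ω' hω' ω hω h.symm))
      (fun h => absurd hω h)]
    rw [coeff_C_mul_X_pow, if_pos rfl]
  have hcoz : ∀ k, (∀ ω ∈ A, E ω ≠ k) → p.coeff k = 0 := by
    intro k hk
    rw [hpdef, finset_sum_coeff]
    refine Finset.sum_eq_zero fun ω hω => ?_
    rw [coeff_C_mul_X_pow]
    exact if_neg fun h => hk ω hω h.symm
  have hEne : E ω₁ ≠ E ω₂ := fun h => hne (hEinj ω₁ hω₁ ω₂ hω₂ h)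
  obtain ⟨r, hreval, hrV⟩ := exists_root_V_eq_zero v hv_mul hv_ultra p (E ω₁) (E ω₂) hEne
    (by rw [hco ω₁ hω₁]; exact (B ω₁).ne_zero)
    (by rw [hco ω₂ hω₂]; exact (B ω₂).ne_zero)
    (by rw [hco ω₁ hω₁, hco ω₂ hω₂, V_unit, V_unit, hvB ω₁ hω₁, hvB ω₂ hω₂]
        exact_mod_cast heq)
    (by
      intro k
      by_cases hk : ∃ ω ∈ A, E ω = k
      · obtain ⟨ω, hω, rfl⟩ := hk
        rw [hco ω₁ hω₁, hco ω hω, V_unit, V_unit, hvB ω₁ hω₁, hvB ω hω]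
        exact_mod_cast hmin ω hω
      · push_neg at hk
        rw [hcoz k hk, V_zero]
        exact le_top)
  have hr0 : r ≠ 0 := by
    intro h
    rw [h, V_zero] at hrV
    simp at hrV
  set T : Kˣ := Units.mk0 r hr0 with hTdef
  have hvT : v T = 0 := by
    have h1 : V v ((T : K)) = ((0 : ℚ) : WithTop ℚ) := by
      have h2 : ((T : K)) = r := rfl
      rw [h2, hrV]
      rfl
    rw [V_unit] at h1
    exact_mod_cast h1
  refine ⟨fun i => t i * T ^ (M ^ (i : ℕ)), ?_, ?_⟩
  · intro i
    show v (t i * T ^ (M ^ (i : ℕ))) = w i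
    rw [hv_mul, v_zpow v hv_mul, hvT, mul_zero, add_zero, ht]
  · show ∑ ω ∈ A, (a ω : K) * ∏ i, ((t i * T ^ (M ^ (i : ℕ)) : Kˣ) : K) ^ ω i = 0
    have hunit : ∀ ω : Fin n → ℤ, (a ω) * ∏ i, (t i * T ^ (M ^ (i : ℕ))) ^ ω i
        = B ω * T ^ (e ω) := by
      intro ω
      have hstep : ∀ i : Fin n, (t i * T ^ (M ^ (i : ℕ))) ^ ω i
          = t i ^ ω i * T ^ (ω i * M ^ (i : ℕ)) := by
        intro i
        rw [mul_zpow, ← zpow_mul, mul_comm (M ^ (i:ℕ)) (ω i)]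
      calc (a ω) * ∏ i, (t i * T ^ (M ^ (i : ℕ))) ^ ω i
          = (a ω) * ∏ i, (t i ^ ω i * T ^ (ω i * M ^ (i : ℕ))) := by
            rw [Finset.prod_congr rfl fun i _ => hstep i]
        _ = (a ω * ∏ i, t i ^ ω i) * T ^ (∑ i, ω i * M ^ (i : ℕ)) := by
            rw [Finset.prod_mul_distrib, zpow_finset_sum, ← mul_assoc]
        _ = B ω * T ^ (e ω) := rfl
    calc ∑ ω ∈ A, (a ω : K) * ∏ i, ((t i * T ^ (M ^ (i : ℕ)) : Kˣ) : K) ^ ω i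
        = ∑ ω ∈ A, ((B ω * T ^ (e ω) : Kˣ) : K) := by
          refine Finset.sum_congr rfl fun ω hω => ?_
          rw [← coe_term, hunit ω]
      _ = ∑ ω ∈ A, ((T ^ m0 : Kˣ) : K) * ((B ω : K) * r ^ (E ω)) := by
          refine Finset.sum_congr rfl fun ω hω => ?_
          have h1 : e ω = m0 + (E ω : ℤ) := by have h3 := hE ω hω; linarith
          rw [h1, zpow_add, zpow_natCast]
          simp only [Units.val_mul, Units.val_pow_eq_pow_val]
          have h2 : ((T : K)) = r := rfl
          rw [h2]
          ring
      _ = ((T ^ m0 : Kˣ) : K) * p.eval r := by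
          rw [← Finset.mul_sum]
          congr 1
          rw [hpdef, eval_finset_sum]
          refine Finset.sum_congr rfl fun ω hω => ?_
          simp [eval_mul, eval_pow]
      _ = 0 := by rw [hreval, mul_zero]

theorem easy_dir {K : Type*} [Field K]
    (v : Kˣ → ℚ)
    (hv_mul : ∀ x y : Kˣ, v (x * y) = v x + v y)
    (hv_ultra : ∀ x y z : Kˣ, (x : K) + (y : K) = (z : K) → min (v x) (v y) ≤ v z)
    (n : ℕ) (A : Finset (Fin n → ℤ)) (hA : A.Nonempty)
    (a : (Fin n → ℤ) → Kˣ) (ha : ∀ ω ∈ A, v (a ω) = 0) (w : Fin n → ℚ)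
    (x : Fin n → Kˣ) (hx : ∀ i, v (x i) = w i)
    (hsum : ∑ ω ∈ A, (a ω : K) * ∏ i, (x i : K) ^ ω i = 0) :
    ∃ ω₁ ∈ A, ∃ ω₂ ∈ A, ω₁ ≠ ω₂ ∧
      (∑ i, (ω₁ i : ℚ) * w i) = (∑ i, (ω₂ i : ℚ) * w i) ∧
      ∀ ω ∈ A, (∑ i, (ω₁ i : ℚ) * w i) ≤ ∑ i, (ω i : ℚ) * w i := by
  classical
  obtain ⟨ω₁, hω₁, hm⟩ := Finset.exists_min_image A (fun ω => ∑ i, (ω i : ℚ) * w i) hA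
  have hVF : ∀ ω ∈ A, V v ((a ω * ∏ i, x i ^ ω i : Kˣ) : K)
      = ((∑ i, (ω i : ℚ) * w i : ℚ) : WithTop ℚ) := by
    intro ω hω
    rw [V_unit]
    have h1 : v (a ω * ∏ i, x i ^ ω i) = ∑ i, (ω i : ℚ) * w i := by
      rw [hv_mul, v_prod v hv_mul, ha ω hω, zero_add]
      exact Finset.sum_congr rfl fun i _ => by rw [v_zpow v hv_mul, hx i]
    exact_mod_cast congrArg (fun q : ℚ => (q : WithTop ℚ)) h1
  have hkey : ∃ ω₂ ∈ A, ω₂ ≠ ω₁ ∧ (∑ i, (ω₂ i : ℚ) * w i) ≤ ∑ i, (ω₁ i : ℚ) * w i := by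
    by_contra hcon
    push_neg at hcon
    have hVs : V v (∑ ω ∈ A, ((a ω * ∏ i, x i ^ ω i : Kˣ) : K))
        = V v ((a ω₁ * ∏ i, x i ^ ω₁ i : Kˣ) : K) := by
      refine V_sum_eq v hv_mul hv_ultra A _ ω₁ hω₁ ?_
      intro j hj hjne
      rw [hVF j hj, hVF ω₁ hω₁]
      exact_mod_cast hcon j hj hjne
    have hz : ∑ ω ∈ A, ((a ω * ∏ i, x i ^ ω i : Kˣ) : K) = 0 := by
      rw [← hsum]
      exact Finset.sum_congr rfl fun ω _ => coe_term (a ω) x ω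
    rw [hz, V_zero, hVF ω₁ hω₁] at hVs
    exact WithTop.coe_ne_top hVs.symm
  obtain ⟨ω₂, hω₂, hne2, hle⟩ := hkey
  exact ⟨ω₁, hω₁, ω₂, hω₂, fun h => hne2 h.symm, le_antisymm (hm ω₂ hω₂) hle, hm⟩

end TropAux


/-- **Tropicalization of a hypersurface with constant coefficients.** Let `K` be an algebraically
closed field with a surjective valuation `v : Kˣ → ℚ` satisfying the ultrametric inequality. Let
`A ⊆ ℤ^n` be finite with at least two elements and let `a_ω ∈ Kˣ` with `v(a_ω) = 0` for `ω ∈ A`.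
For `f(x) = Σ_{ω ∈ A} a_ω x^ω`, the set `{ v(x) : f(x) = 0 }` equals the set of `w ∈ ℚ^n` where
the minimum of `⟨ω, w⟩` over `ω ∈ A` is attained at least twice. -/
theorem tropicalization_hypersurface_constant_coefficients
    (K : Type*) [Field K] [IsAlgClosed K]
    (v : Kˣ → ℚ)
    (hv_mul : ∀ x y : Kˣ, v (x * y) = v x + v y)
    (hv_surj : Function.Surjective v)
    (hv_ultra : ∀ x y z : Kˣ, (x : K) + (y : K) = (z : K) → min (v x) (v y) ≤ v z)
    (n : ℕ) (A : Finset (Fin n → ℤ)) (hA : 2 ≤ A.card)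
    (a : (Fin n → ℤ) → Kˣ) (ha : ∀ ω ∈ A, v (a ω) = 0) :
    {w : Fin n → ℚ | ∃ x : Fin n → Kˣ, (∀ i, v (x i) = w i) ∧
        ∑ ω ∈ A, (a ω : K) * ∏ i, (x i : K) ^ ω i = 0}
      = {w : Fin n → ℚ | ∃ ω₁ ∈ A, ∃ ω₂ ∈ A, ω₁ ≠ ω₂ ∧
          (∑ i, (ω₁ i : ℚ) * w i) = (∑ i, (ω₂ i : ℚ) * w i) ∧
          ∀ ω ∈ A, (∑ i, (ω₁ i : ℚ) * w i) ≤ ∑ i, (ω i : ℚ) * w i} := by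
  classical
  ext w
  simp only [Set.mem_setOf_eq]
  constructor
  · rintro ⟨x, hx, hsum⟩
    exact TropAux.easy_dir v hv_mul hv_ultra n A (Finset.card_pos.mp (by omega)) a ha w x hx hsum
  · rintro ⟨ω₁, hω₁, ω₂, hω₂, hne, heq, hmin⟩
    exact TropAux.hard_dir v hv_mul hv_surj hv_ultra n A a ha w ω₁ hω₁ ω₂ hω₂ hne heq hmin
end
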